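/- Let S ∈ sp(n,ℂ) have purely real spectrum, Re Q_S ≥ 0, nilpotent part N with N² = 0, and assume in addition that S satisfies condition (R): the generalized eigenspace sum V_λ ⊕ V_{−λ} is invariant under complex conjugation for every λ ∈ ℝ∖{0}. Write the semisimple part D = D₁ + iD₂ with D₁, D₂ real. Then [D₁,D₂] = 0 if and only if D₁ = 0. -/
import Mathlib


open MeasureTheory Complex Matrix

noncomputable section

/-- Index type for `2n`-dimensional (symplectic) vectors: `X`-coordinates `inl j`,
`Y`-coordinates `inr j`. -/
abbrev Idx (n : ℕ) := Fin n ⊕ Fin n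

/-- The standard symplectic matrix `J = [[0, I],[-I, 0]]` over `ℂ`. -/
def Jmat (n : ℕ) : Matrix (Idx n) (Idx n) ℂ := Matrix.fromBlocks 0 1 (-1) 0

/-- The standard symplectic matrix `J = [[0, I],[-I, 0]]` over `ℝ`. -/
def JmatR (n : ℕ) : Matrix (Idx n) (Idx n) ℝ := Matrix.fromBlocks 0 1 (-1) 0

/-- The standard symplectic form `σ(z,w) = ᵗz J w` on `ℂ^{2n}`. -/
def sigmaC (n : ℕ) (z w : Idx n → ℂ) : ℂ := z ⬝ᵥ (Jmat n).mulVec w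

/-- The standard symplectic form on `ℝ^{2n}`. -/
def sigmaR (n : ℕ) (v w : Idx n → ℝ) : ℝ := v ⬝ᵥ (JmatR n).mulVec w

/-- Inclusion of real vectors into `ℂ^{2n}`. -/
def realVec (n : ℕ) (v : Idx n → ℝ) : Idx n → ℂ := fun i => (v i : ℂ)

/-- Complex conjugation on `ℂ^{2n}` relative to the real form `ℝ^{2n}`. -/
def conjVec (n : ℕ) (z : Idx n → ℂ) : Idx n → ℂ := fun i => (starRingEnd ℂ) (z i)

/-- `S ∈ sp(n, ℂ)`, i.e. `σ(Sz, w) + σ(z, Sw) = 0` for all `z, w`. -/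
def InSp (n : ℕ) (S : Matrix (Idx n) (Idx n) ℂ) : Prop := Sᵀ * Jmat n + Jmat n * S = 0

/-- `Re Q_S ≥ 0`: the real part of the quadratic form `Q_S(v) = σ(v, Sv)` is
positive semi-definite on `ℝ^{2n}`. -/
def RePosQ (n : ℕ) (S : Matrix (Idx n) (Idx n) ℂ) : Prop :=
  ∀ v : Idx n → ℝ, 0 ≤ (sigmaC n (realVec n v) (S.mulVec (realVec n v))).re

/-- The generalized eigenspace `V_μ` of the matrix `S` for the eigenvalue `μ`. -/
def genEig (n : ℕ) (S : Matrix (Idx n) (Idx n) ℂ) (μ : ℂ) : Submodule ℂ (Idx n → ℂ) :=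
  Module.End.maxGenEigenspace (Matrix.mulVecLin S) μ

/-- `V_r`: the sum of the generalized eigenspaces of `S` for real eigenvalues. -/
def Vreal (n : ℕ) (S : Matrix (Idx n) (Idx n) ℂ) : Submodule ℂ (Idx n → ℂ) :=
  ⨆ lam : ℝ, genEig n S (lam : ℂ)

/-- `V_i`: the sum of the generalized eigenspaces of `S` for non-real eigenvalues. -/
def Vimag (n : ℕ) (S : Matrix (Idx n) (Idx n) ℂ) : Submodule ℂ (Idx n → ℂ) :=
  ⨆ μ : {z : ℂ // z.im ≠ 0}, genEig n S (μ : ℂ)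

/-- `Sr` is the "real part" `S_r` of `S`: it agrees with `S` on `V_r` and vanishes on `V_i`. -/
def IsRealPart (n : ℕ) (S Sr : Matrix (Idx n) (Idx n) ℂ) : Prop :=
  (∀ v ∈ Vreal n S, Sr.mulVec v = S.mulVec v) ∧ ∀ v ∈ Vimag n S, Sr.mulVec v = 0

/-- `Si` is the "imaginary part" `S_i` of `S`: it vanishes on `V_r` and agrees with `S`
on `V_i`. -/
def IsImagPart (n : ℕ) (S Si : Matrix (Idx n) (Idx n) ℂ) : Prop :=
  (∀ v ∈ Vreal n S, Si.mulVec v = 0) ∧ ∀ v ∈ Vimag n S, Si.mulVec v = S.mulVec v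

/-- Condition (R): `V_λ ⊕ V_{−λ}` is invariant under complex conjugation for every
real `λ ≠ 0`. -/
def CondR (n : ℕ) (S : Matrix (Idx n) (Idx n) ℂ) : Prop :=
  ∀ lam : ℝ, lam ≠ 0 →
    ∀ z ∈ genEig n S (lam : ℂ) ⊔ genEig n S (-(lam : ℂ)),
      conjVec n z ∈ genEig n S (lam : ℂ) ⊔ genEig n S (-(lam : ℂ))

/-- `ν = Σ_j ν_j`: the sum of the imaginary parts of the eigenvalues of `S` lying in the
upper half plane, counted with multiplicity. -/
def nuTotal (n : ℕ) (S : Matrix (Idx n) (Idx n) ℂ) : ℝ :=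
  (S.charpoly.roots.map (fun z => max z.im 0)).sum

/-- `S_i ≠ 0`, i.e. `S` has at least one non-real eigenvalue. -/
def HasNonrealEig (n : ℕ) (S : Matrix (Idx n) (Idx n) ℂ) : Prop :=
  ∃ z ∈ S.charpoly.roots, z.im ≠ 0

/-- Semisimple (= diagonalizable over `ℂ`) matrix. -/
def IsSemisimpleMat (n : ℕ) (D : Matrix (Idx n) (Idx n) ℂ) : Prop :=
  ∃ (P : Matrix (Idx n) (Idx n) ℂ) (d : Idx n → ℂ), IsUnit P ∧ D = P * Matrix.diagonal d * P⁻¹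

/-- `S = D + N` is the Jordan decomposition of `S`: `D` semisimple, `N` nilpotent,
`DN = ND`. -/
def IsJordanDecomp (n : ℕ) (S D N : Matrix (Idx n) (Idx n) ℂ) : Prop :=
  S = D + N ∧ IsSemisimpleMat n D ∧ IsNilpotent N ∧ D * N = N * D

section Statement9Aux

variable {n : ℕ}

lemma conjVec_mulVec (A : Matrix (Idx n) (Idx n) ℂ) (v : Idx n → ℂ) :
    conjVec n (A.mulVec v) = (A.map (starRingEnd ℂ)).mulVec (conjVec n v) := by
  funext i
  simp [conjVec, Matrix.mulVec, dotProduct, map_sum, Matrix.map_apply]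

lemma conjVec_conjVec (v : Idx n → ℂ) : conjVec n (conjVec n v) = v := by
  funext i; simp [conjVec]

lemma conjVec_add (v w : Idx n → ℂ) : conjVec n (v + w) = conjVec n v + conjVec n w := by
  funext i; simp [conjVec]

lemma conjVec_smul (c : ℂ) (v : Idx n → ℂ) :
    conjVec n (c • v) = (starRingEnd ℂ) c • conjVec n v := by
  funext i; simp [conjVec]

lemma dot_mulVec_left (A : Matrix (Idx n) (Idx n) ℂ) (x y : Idx n → ℂ) :
    (A.mulVec x) ⬝ᵥ y = x ⬝ᵥ (Aᵀ.mulVec y) := by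
  rw [dotProduct_comm, Matrix.dotProduct_mulVec, ← Matrix.mulVec_transpose,
    dotProduct_comm]

lemma Jmat_transpose : (Jmat n)ᵀ = -(Jmat n) := by
  simp only [Jmat, Matrix.fromBlocks_transpose, Matrix.transpose_zero, Matrix.transpose_one,
    Matrix.transpose_neg]
  simp [Matrix.fromBlocks_neg]

lemma sigma_swap (x y : Idx n → ℂ) : sigmaC n x y = - sigmaC n y x := by
  unfold sigmaC
  rw [dotProduct_comm, dot_mulVec_left, Jmat_transpose, Matrix.neg_mulVec,
    dotProduct_neg]

lemma sigma_self (x : Idx n → ℂ) : sigmaC n x x = 0 := by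
  have := sigma_swap (n := n) x x; linear_combination this / 2 -- maybe
lemma sigma_add_left (x y z : Idx n → ℂ) :
    sigmaC n (x + y) z = sigmaC n x z + sigmaC n y z := by
  simp [sigmaC, add_dotProduct]

lemma sigma_add_right (x y z : Idx n → ℂ) :
    sigmaC n x (y + z) = sigmaC n x y + sigmaC n x z := by
  simp [sigmaC, Matrix.mulVec_add, dotProduct_add]

lemma sigma_smul_left (c : ℂ) (x z : Idx n → ℂ) :
    sigmaC n (c • x) z = c * sigmaC n x z := by
  simp [sigmaC, smul_dotProduct, smul_eq_mul]

lemma sigma_smul_right (c : ℂ) (x z : Idx n → ℂ) :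
    sigmaC n x (c • z) = c * sigmaC n x z := by
  simp [sigmaC, Matrix.mulVec_smul, dotProduct_smul, smul_eq_mul]

lemma sigma_sp {S : Matrix (Idx n) (Idx n) ℂ} (hS : InSp n S) (x y : Idx n → ℂ) :
    sigmaC n (S.mulVec x) y = - sigmaC n x (S.mulVec y) := by
  have h : Sᵀ * Jmat n = -(Jmat n * S) := by
    have h0 := hS
    unfold InSp at h0
    rw [← eq_neg_of_add_eq_zero_left h0]
  unfold sigmaC
  rw [dot_mulVec_left, Matrix.mulVec_mulVec, h, Matrix.neg_mulVec, dotProduct_neg,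
    ← Matrix.mulVec_mulVec]
lemma sigma_sp_shift {S : Matrix (Idx n) (Idx n) ℂ} (hS : InSp n S) (lam : ℂ)
    (x y : Idx n → ℂ) :
    sigmaC n (S.mulVec x - lam • x) y
      = - sigmaC n x (S.mulVec y - lam • y) - (2 * lam) * sigmaC n x y := by
  have h1 : S.mulVec x - lam • x = S.mulVec x + (-lam) • x := by
    funext i; simp [sub_eq_add_neg, neg_smul]
  have h2 : S.mulVec y - lam • y = S.mulVec y + (-lam) • y := by
    funext i; simp [sub_eq_add_neg, neg_smul]
  rw [h1, h2, sigma_add_left, sigma_add_right, sigma_smul_left, sigma_smul_right,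
    sigma_sp hS]
  ring

/-- Isotropy: if `(S - λ)² w = 0` with `λ ≠ 0`, then `σ(w, Sw) = 0`. -/
lemma sigma_isotropic {S : Matrix (Idx n) (Idx n) ℂ} (hS : InSp n S) (lam : ℂ)
    (hlam : lam ≠ 0) (w : Idx n → ℂ)
    (h2 : S.mulVec (S.mulVec w - lam • w) - lam • (S.mulVec w - lam • w) = 0) :
    sigmaC n w (S.mulVec w) = 0 := by
  set u := S.mulVec w - lam • w with hu
  have e0 : sigmaC n u u = 0 := sigma_self u
  have e1 : sigmaC n u u = - sigmaC n w (S.mulVec u - lam • u) - (2 * lam) * sigmaC n w u := by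
    rw [← sigma_sp_shift hS lam w u]
  rw [h2] at e1
  have e2 : sigmaC n w 0 = 0 := by simp [sigmaC]
  rw [e2, e0] at e1
  have e3 : sigmaC n w u = 0 := by
    have : (2 * lam) * sigmaC n w u = 0 := by linear_combination e1
    rcases mul_eq_zero.mp this with h | h
    · exact absurd h (by simp [hlam])
    · exact h
  have : S.mulVec w = u + lam • w := by rw [hu]; funext i; simp
  rw [this, sigma_add_right, sigma_smul_right, e3, sigma_self]
  ring
lemma realVec_eq (w : Idx n → ℂ) (hw : conjVec n w = w) :
    realVec n (fun i => (w i).re) = w := by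
  funext i
  have h1 : (starRingEnd ℂ) (w i) = w i := congrFun hw i
  have him : (w i).im = 0 := by
    have h2 := congrArg Complex.im h1
    simp only [Complex.conj_im] at h2
    linarith
  simp [realVec, Complex.ext_iff, him]

lemma single_real (i : Idx n) : realVec n (Pi.single i 1) = Pi.single i (1:ℂ) := by
  funext j
  rcases eq_or_ne j i with rfl | h
  · simp [realVec]
  · simp [realVec, Pi.single_apply, h]

/-- positivity + isotropy ⟹ `S w` is purely imaginary (for `w` real). -/
lemma pos_kernel {S : Matrix (Idx n) (Idx n) ℂ} (hS : InSp n S) (hpos : RePosQ n S)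
    (w : Idx n → ℂ) (hw : conjVec n w = w) (hq : (sigmaC n w (S.mulVec w)).re = 0) :
    conjVec n (S.mulVec w) = - S.mulVec w := by
  have hwr : realVec n (fun i => (w i).re) = w := realVec_eq w hw
  have main : ∀ u : Idx n → ℝ, (sigmaC n (realVec n u) (S.mulVec w)).re = 0 := by
    intro u
    set ru := realVec n u with hru
    set c := (sigmaC n ru (S.mulVec w)).re with hc
    set q := (sigmaC n ru (S.mulVec ru)).re with hqdef
    have hq0 : 0 ≤ q := hpos u
    have hcross : sigmaC n w (S.mulVec ru) = sigmaC n ru (S.mulVec w) := by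
      have h1 := sigma_sp hS w ru
      have h2 := sigma_swap (n := n) (S.mulVec w) ru
      linear_combination h1 - h2
    have key : ∀ t : ℝ, 0 ≤ 2 * c * t + t ^ 2 * q := by
      intro t
      have h0 := hpos ((fun i => (w i).re) + t • u)
      have hrv : realVec n ((fun i => (w i).re) + t • u) = w + (t:ℂ) • ru := by
        funext i
        simp only [realVec, Pi.add_apply, Pi.smul_apply, smul_eq_mul, Pi.smul_apply]
        push_cast
        rw [← hwr]
        simp [realVec, hru]
      rw [hrv] at h0
      have hexp : sigmaC n (w + (t:ℂ) • ru) (S.mulVec (w + (t:ℂ) • ru))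
          = sigmaC n w (S.mulVec w) + ((2*t : ℝ):ℂ) * sigmaC n ru (S.mulVec w)
            + ((t^2 : ℝ):ℂ) * sigmaC n ru (S.mulVec ru) := by
        rw [Matrix.mulVec_add, Matrix.mulVec_smul, sigma_add_left, sigma_add_right,
          sigma_add_right, sigma_smul_left, sigma_smul_right, sigma_smul_right,
          sigma_smul_left, hcross]
        push_cast
        ring
      rw [hexp] at h0
      simp only [Complex.add_re, Complex.re_ofReal_mul, hq] at h0
      rw [← hc, ← hqdef] at h0
      linarith
    -- conclude c = 0
    rcases eq_or_lt_of_le hq0 with hq' | hq'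
    · have k1 := key 1
      have k2 := key (-1)
      rw [← hq'] at k1 k2
      simp at k1 k2
      linarith
    · have k := key (-(c / q))
      have hqne : q ≠ 0 := ne_of_gt hq'
      have : 2 * c * (-(c / q)) + (-(c / q)) ^ 2 * q = - c^2 / q := by
        field_simp
        ring
      rw [this] at k
      have hc2 : c ^ 2 ≤ 0 := by
        rw [div_nonneg_iff] at k
        rcases k with ⟨h1, h2⟩ | ⟨h1, h2⟩
        · linarith
        · nlinarith [sq_nonneg c]
      nlinarith [sq_nonneg c]
  have hcoord : ∀ i, (((Jmat n).mulVec (S.mulVec w)) i).re = 0 := by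
    intro i
    have h := main (Pi.single i 1)
    rw [single_real] at h
    rw [sigmaC] at h
    simpa [single_dotProduct] using h
  have hrez : ∀ i, ((S.mulVec w) i).re = 0 := by
    have hJ : ∀ x : Idx n → ℂ, ∀ j, ((Jmat n).mulVec x) (Sum.inl j) = x (Sum.inr j)
        ∧ ((Jmat n).mulVec x) (Sum.inr j) = - x (Sum.inl j) := by
      intro x j
      constructor <;>
        simp [Jmat, Matrix.fromBlocks_mulVec, Matrix.zero_mulVec, Matrix.one_mulVec,
          Matrix.neg_mulVec]
    intro i
    rcases i with j | j
    · have h := hcoord (Sum.inr j)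
      rw [(hJ (S.mulVec w) j).2] at h
      simpa using h
    · have h := hcoord (Sum.inl j)
      rw [(hJ (S.mulVec w) j).1] at h
      exact h
  funext i
  simp [conjVec, Complex.ext_iff, hrez i]
lemma endpow_apply (A : Matrix (Idx n) (Idx n) ℂ) (μ : ℂ) (k : ℕ) (v : Idx n → ℂ) :
    ((Matrix.mulVecLin A - μ • 1) ^ k) v = ((A - μ • 1) ^ k).mulVec v := by
  induction k generalizing v with
  | zero => simp [Matrix.one_mulVec]
  | succ k ih =>
      rw [pow_succ', pow_succ']
      have h0 : ((Matrix.mulVecLin A - μ • 1) * (Matrix.mulVecLin A - μ • 1) ^ k) v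
          = (Matrix.mulVecLin A - μ • 1) (((Matrix.mulVecLin A - μ • 1) ^ k) v) := rfl
      rw [h0, ih, sub_mul, smul_mul_assoc, one_mul, Matrix.sub_mulVec,
        Matrix.smul_mulVec, ← Matrix.mulVec_mulVec]
      rfl

lemma conj_mul_pow (P Q Pi : Matrix (Idx n) (Idx n) ℂ) (h1 : P * Pi = 1) (h2 : Pi * P = 1)
    (k : ℕ) : (P * Q * Pi) ^ k = P * Q ^ k * Pi := by
  induction k with
  | zero => simp [h1]
  | succ k ih =>
      rw [pow_succ, pow_succ, ih]
      have : P * Q ^ k * Pi * (P * Q * Pi) = P * Q ^ k * ((Pi * P) * (Q * Pi)) := by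
        noncomm_ring
      rw [this, h2, one_mul, ← Matrix.mul_assoc, ← Matrix.mul_assoc]

/-- a diagonalizable matrix acts on its generalized eigenspaces as a scalar. -/
lemma semisimple_eigen {Dm : Matrix (Idx n) (Idx n) ℂ} (hsemi : IsSemisimpleMat n Dm)
    (μ : ℂ) (v : Idx n → ℂ)
    (hv : v ∈ Module.End.maxGenEigenspace (Matrix.mulVecLin Dm) μ) :
    Dm.mulVec v = μ • v := by
  obtain ⟨P, d, hP, rfl⟩ := hsemi
  rw [Module.End.mem_maxGenEigenspace] at hv
  obtain ⟨k, hk⟩ := hv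
  rw [endpow_apply] at hk
  have hdet := (Matrix.isUnit_iff_isUnit_det P).mp hP
  have h1 : P * P⁻¹ = 1 := Matrix.mul_nonsing_inv P hdet
  have h2 : P⁻¹ * P = 1 := Matrix.nonsing_inv_mul P hdet
  have hdiagsub : Matrix.diagonal (fun i => d i - μ) = Matrix.diagonal d - μ • 1 := by
    ext i j
    by_cases h : i = j <;> simp [Matrix.diagonal_apply, h, Matrix.one_apply]
  have hdiag : P * Matrix.diagonal d * P⁻¹ - μ • 1
      = P * Matrix.diagonal (fun i => d i - μ) * P⁻¹ := by
    rw [hdiagsub, Matrix.mul_sub, Matrix.sub_mul, Matrix.mul_smul, Matrix.smul_mul,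
      Matrix.mul_one, h1]
  rw [hdiag, conj_mul_pow P _ P⁻¹ h1 h2, Matrix.diagonal_pow] at hk
  set y := P⁻¹.mulVec v with hy
  have hv' : v = P.mulVec y := by
    rw [hy, Matrix.mulVec_mulVec, h1, Matrix.one_mulVec]
  have hky : Matrix.mulVec (Matrix.diagonal ((fun i => d i - μ) ^ k)) y = 0 := by
    have h3 := congrArg (fun z => P⁻¹.mulVec z) hk
    simp only [Matrix.mulVec_mulVec, Matrix.mulVec_zero] at h3
    rw [← Matrix.mul_assoc, ← Matrix.mul_assoc, h2, Matrix.one_mul] at h3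
    rw [← Matrix.mulVec_mulVec] at h3
    exact h3
  have hentry : ∀ i, (d i - μ) * y i = 0 := by
    intro i
    have hthis := congrFun hky i
    rw [Matrix.mulVec_diagonal] at hthis
    simp only [Pi.pow_apply, Pi.zero_apply] at hthis
    rcases eq_or_ne k 0 with rfl | hk0
    · rw [pow_zero, one_mul] at hthis
      rw [hthis, mul_zero]
    · rcases mul_eq_zero.mp hthis with h | h
      · rw [(pow_eq_zero_iff hk0).mp h, zero_mul]
      · rw [h, mul_zero]
  have hzero : Matrix.mulVec (Matrix.diagonal (fun i => d i - μ)) y = 0 := by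
    funext i
    rw [Matrix.mulVec_diagonal]
    exact hentry i
  have hfin : (P * Matrix.diagonal (fun i => d i - μ) * P⁻¹).mulVec v = 0 := by
    rw [hv', Matrix.mulVec_mulVec, Matrix.mul_assoc (P * Matrix.diagonal fun i => d i - μ) P⁻¹ P,
      h2, Matrix.mul_one, ← Matrix.mulVec_mulVec, hzero, Matrix.mulVec_zero]
  rw [← sub_eq_zero]
  rw [← hdiag] at hfin
  rw [Matrix.sub_mulVec, Matrix.smul_mulVec, Matrix.one_mulVec] at hfin
  exact hfin
/-- An eigenvector of `D` lies in the generalized eigenspace of `S = D + N` (with `N² = 0`). -/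
lemma mem_genEig_of_eig {S D N : Matrix (Idx n) (Idx n) ℂ} (hSDN : S = D + N)
    (hDN : D * N = N * D) (hN2 : N * N = 0) (α : ℂ) (v : Idx n → ℂ)
    (hv : D.mulVec v = α • v) : v ∈ genEig n S α := by
  rw [genEig, Module.End.mem_maxGenEigenspace]
  refine ⟨2, ?_⟩
  rw [endpow_apply, pow_two, ← Matrix.mulVec_mulVec]
  have e1 : (S - α • 1).mulVec v = N.mulVec v := by
    rw [hSDN, Matrix.sub_mulVec, Matrix.add_mulVec, Matrix.smul_mulVec,
      Matrix.one_mulVec, hv]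
    abel
  rw [e1]
  rw [hSDN, Matrix.sub_mulVec, Matrix.add_mulVec, Matrix.smul_mulVec, Matrix.one_mulVec]
  rw [Matrix.mulVec_mulVec, hDN, ← Matrix.mulVec_mulVec, hv, Matrix.mulVec_smul]
  rw [Matrix.mulVec_mulVec, hN2, Matrix.zero_mulVec]
  abel

/-- extraction of a true eigenvector from a generalized one. -/
lemma exists_eigvec {S : Matrix (Idx n) (Idx n) ℂ} (α : ℂ) :
    ∀ (k : ℕ) (v : Idx n → ℂ), v ≠ 0 → ((S - α • 1) ^ k).mulVec v = 0 →
      ∃ w, w ≠ 0 ∧ S.mulVec w = α • w := by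
  intro k
  induction k with
  | zero =>
      intro v hv h
      rw [pow_zero, Matrix.one_mulVec] at h
      exact absurd h hv
  | succ k ih =>
      intro v hv h
      by_cases hu : (S - α • 1).mulVec v = 0
      · refine ⟨v, hv, ?_⟩
        rw [Matrix.sub_mulVec, Matrix.smul_mulVec, Matrix.one_mulVec, sub_eq_zero] at hu
        exact hu
      · refine ih ((S - α • 1).mulVec v) hu ?_
        rw [Matrix.mulVec_mulVec, ← pow_succ, h]

/-- generalized eigenvalues have zero imaginary part. -/
lemma eig_real {S : Matrix (Idx n) (Idx n) ℂ} (hreal : ∀ z ∈ S.charpoly.roots, z.im = 0)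
    (α : ℂ) (v : Idx n → ℂ) (hv : v ∈ genEig n S α) (hv0 : v ≠ 0) : α.im = 0 := by
  rw [genEig, Module.End.mem_maxGenEigenspace] at hv
  obtain ⟨k, hk⟩ := hv
  rw [endpow_apply] at hk
  obtain ⟨w, hw0, hw⟩ := exists_eigvec α k v hv0 hk
  have hdet : (α • 1 - S).det = 0 := by
    rw [← Matrix.exists_mulVec_eq_zero_iff]
    refine ⟨w, hw0, ?_⟩
    rw [Matrix.sub_mulVec, Matrix.smul_mulVec, Matrix.one_mulVec, hw, sub_self]
  have heval : S.charpoly.eval α = 0 := by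
    rw [Matrix.charpoly, ← Polynomial.coe_evalRingHom, RingHom.map_det]
    rw [← hdet]
    congr 1
    ext i j
    rcases eq_or_ne i j with rfl | h
    · simp [Matrix.charmatrix_apply_eq, Matrix.one_apply]
    · simp [Matrix.charmatrix_apply_ne _ _ _ h, Matrix.one_apply, h]
  apply hreal
  rw [Polynomial.mem_roots']
  exact ⟨(Matrix.charpoly_monic S).ne_zero, heval⟩
/-- The core positivity argument: a real vector which is a simultaneous `(a,a)`-eigenvector
(`a ≠ 0` real) of `D` must vanish. -/
lemma pos_core {S D N : Matrix (Idx n) (Idx n) ℂ} (hS : InSp n S) (hpos : RePosQ n S)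
    (hSDN : S = D + N) (hDN : D * N = N * D) (hN2 : N * N = 0)
    (a : ℝ) (ha : a ≠ 0) (w : Idx n → ℂ) (hw : conjVec n w = w)
    (hDw : D.mulVec w = (a:ℂ) • w) : w = 0 := by
  have haC : (a:ℂ) ≠ 0 := by exact_mod_cast ha
  set u := N.mulVec w with hu
  have hNu : N.mulVec u = 0 := by
    rw [hu, Matrix.mulVec_mulVec, hN2, Matrix.zero_mulVec]
  have hDu : D.mulVec u = (a:ℂ) • u := by
    rw [hu, Matrix.mulVec_mulVec, hDN, ← Matrix.mulVec_mulVec, hDw, Matrix.mulVec_smul]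
  have hSw : S.mulVec w = (a:ℂ) • w + u := by
    rw [hSDN, Matrix.add_mulVec, hDw]
  have hSu : S.mulVec u = (a:ℂ) • u := by
    rw [hSDN, Matrix.add_mulVec, hDu, hNu, add_zero]
  -- isotropy for w
  have hq1 : sigmaC n w (S.mulVec w) = 0 := by
    apply sigma_isotropic hS (a:ℂ) haC
    rw [hSw]
    have h1 : (a:ℂ) • w + u - (a:ℂ) • w = u := by module
    rw [h1, hSu]
    module
  have hker1 : conjVec n (S.mulVec w) = - S.mulVec w :=
    pos_kernel hS hpos w hw (by rw [hq1]; simp)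
  -- conjugate of u
  set ub := conjVec n u with hub
  have hubeq : ub = -u - ((2*a : ℝ):ℂ) • w := by
    have h2 : conjVec n (S.mulVec w) = (a:ℂ) • w + ub := by
      rw [hSw, conjVec_add, conjVec_smul, hw, hub, Complex.conj_ofReal]
    rw [h2, hSw] at hker1
    have := hker1
    push_cast
    linear_combination (norm := module) this
  -- the imaginary direction r
  set r := Complex.I • (u - ub) with hr
  have hrconj : conjVec n r = r := by
    rw [hr, conjVec_smul]
    have : conjVec n (u - ub) = ub - u := by
      funext i
      simp [conjVec, hub, map_sub]
    rw [this]
    simp only [Complex.conj_I]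
    module
  have hDub : D.mulVec ub = (a:ℂ) • ub := by
    rw [hubeq, Matrix.mulVec_sub, Matrix.mulVec_neg, hDu, Matrix.mulVec_smul, hDw]
    module
  have hNub : N.mulVec ub = -((2*a : ℝ):ℂ) • u := by
    rw [hubeq, Matrix.mulVec_sub, Matrix.mulVec_neg, hNu, Matrix.mulVec_smul, ← hu]
    module
  have hDr : D.mulVec r = (a:ℂ) • r := by
    rw [hr, Matrix.mulVec_smul, Matrix.mulVec_sub, hDu, hDub]
    module
  have hNr : N.mulVec r = ((2*a : ℝ):ℂ) • Complex.I • u := by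
    rw [hr, Matrix.mulVec_smul, Matrix.mulVec_sub, hNu, hNub]
    module
  have hSr : S.mulVec r = (a:ℂ) • r + ((2*a : ℝ):ℂ) • Complex.I • u := by
    rw [hSDN, Matrix.add_mulVec, hDr, hNr]
  -- isotropy for r
  have hq2 : sigmaC n r (S.mulVec r) = 0 := by
    apply sigma_isotropic hS (a:ℂ) haC
    rw [hSr]
    have h1 : (a:ℂ) • r + ((2*a : ℝ):ℂ) • Complex.I • u - (a:ℂ) • r
        = ((2*a : ℝ):ℂ) • Complex.I • u := by module
    rw [h1, Matrix.mulVec_smul, Matrix.mulVec_smul, hSu]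
    module
  have hker2 : conjVec n (S.mulVec r) = - S.mulVec r :=
    pos_kernel hS hpos r hrconj (by rw [hq2]; simp)
  -- compute both sides of hker2 and conclude u = -a • w
  have hSr' : S.mulVec r = Complex.I • (((4*a : ℝ):ℂ) • u + ((2*a^2 : ℝ):ℂ) • w) := by
    rw [hSr, hr, hubeq]
    push_cast
    module
  have hconjSr : conjVec n (S.mulVec r) = - Complex.I • (((4*a : ℝ):ℂ) • ub + ((2*a^2 : ℝ):ℂ) • w) := by
    rw [hSr', conjVec_smul]
    have : conjVec n (((4*a : ℝ):ℂ) • u + ((2*a^2 : ℝ):ℂ) • w)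
        = ((4*a : ℝ):ℂ) • ub + ((2*a^2 : ℝ):ℂ) • w := by
      rw [conjVec_add, conjVec_smul, conjVec_smul, hw, ← hub, Complex.conj_ofReal,
        Complex.conj_ofReal]
    rw [this]
    simp only [Complex.conj_I]
  have hueq : u = (-(a:ℂ)) • w := by
    have hvec : conjVec n (S.mulVec r) = - S.mulVec r := hker2
    rw [hconjSr, hSr', hubeq] at hvec
    push_cast at hvec
    funext i
    have h9 := congrFun hvec i
    simp only [Pi.smul_apply, Pi.add_apply, Pi.sub_apply, Pi.neg_apply, smul_eq_mul] at h9
    have hI2 : Complex.I * Complex.I = -1 := Complex.I_mul_I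
    have h8 : 8*(a:ℂ)*(u i) + 8*(a:ℂ)^2*(w i) = 0 := by
      linear_combination (-Complex.I) * h9 + (8*(a:ℂ)*(u i) + 8*(a:ℂ)^2*(w i)) * hI2
    have h12 : (8*(a:ℂ)) * (u i + (a:ℂ) * w i) = 0 := by linear_combination h8
    have hne : (8*(a:ℂ)) ≠ 0 := by
      simp [haC]
    have h13 := (mul_eq_zero.mp h12).resolve_left hne
    simp only [Pi.smul_apply, smul_eq_mul, Pi.neg_apply, neg_smul]
    linear_combination h13
  -- conclude
  have h0 : N.mulVec ((-(a:ℂ)) • w) = 0 := by rw [← hueq]; exact hNu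
  rw [Matrix.mulVec_smul, ← hu] at h0
  have hu0' : u = 0 := by
    rcases smul_eq_zero.mp h0 with h | h
    · exact absurd (neg_eq_zero.mp h) haC
    · exact h
  have hw0 : (-(a:ℂ)) • w = 0 := by rw [← hueq]; exact hu0'
  rcases smul_eq_zero.mp hw0 with h | h
  · exact absurd (neg_eq_zero.mp h) haC
  · exact h
lemma conjMatConj (A : Matrix (Idx n) (Idx n) ℂ) :
    (A.map (starRingEnd ℂ)).map (starRingEnd ℂ) = A := by
  ext i j; simp [Matrix.map_apply]

lemma genEig_indep {S : Matrix (Idx n) (Idx n) ℂ} {α β : ℂ} (h1 : α ≠ β) (h2 : -α ≠ β)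
    (v : Idx n → ℂ) (hv1 : v ∈ genEig n S α ⊔ genEig n S (-α)) (hv2 : v ∈ genEig n S β) :
    v = 0 := by
  have hind := Module.End.independent_maxGenEigenspace (Matrix.mulVecLin S)
  have hd := hind β
  have hle : genEig n S α ⊔ genEig n S (-α)
      ≤ ⨆ ν, ⨆ (_ : ν ≠ β), Module.End.maxGenEigenspace (Matrix.mulVecLin S) ν := by
    apply sup_le
    · exact le_iSup₂ (f := fun ν (_ : ν ≠ β) =>
        Module.End.maxGenEigenspace (Matrix.mulVecLin S) ν) α h1
    · exact le_iSup₂ (f := fun ν (_ : ν ≠ β) =>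
        Module.End.maxGenEigenspace (Matrix.mulVecLin S) ν) (-α) h2
  exact (Submodule.disjoint_def.mp hd) v hv2 (hle hv1)

/-- the key dichotomy: a simultaneous eigenvector of `D` and `conj D` with eigenvalues
`α`, `β` forces `β = -α`. -/
lemma eig_pair {S D N : Matrix (Idx n) (Idx n) ℂ} (hS : InSp n S)
    (hreal : ∀ z ∈ S.charpoly.roots, z.im = 0) (hpos : RePosQ n S)
    (hSDN : S = D + N) (hDN : D * N = N * D) (hN2 : N * N = 0) (hR : CondR n S)
    (α β : ℂ) (v : Idx n → ℂ) (hv0 : v ≠ 0) (hDv : D.mulVec v = α • v)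
    (hDcv : (D.map (starRingEnd ℂ)).mulVec v = β • v) : β = -α := by
  set vb := conjVec n v with hvb
  have hvbv : conjVec n vb = v := by rw [hvb, conjVec_conjVec]
  have hvb0 : vb ≠ 0 := by
    intro h
    apply hv0
    rw [← hvbv, h]
    funext i; simp [conjVec]
  have hDvb : D.mulVec vb = (starRingEnd ℂ) β • vb := by
    have h := congrArg (conjVec n) hDcv
    rw [conjVec_mulVec, conjVec_smul, conjMatConj] at h
    exact h
  have hDcvb : (D.map (starRingEnd ℂ)).mulVec vb = (starRingEnd ℂ) α • vb := by
    have h := congrArg (conjVec n) hDv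
    rw [conjVec_mulVec, conjVec_smul] at h
    exact h
  have him : α.im = 0 := eig_real hreal α v (mem_genEig_of_eig hSDN hDN hN2 α v hDv) hv0
  have himb : ((starRingEnd ℂ) β).im = 0 :=
    eig_real hreal _ vb (mem_genEig_of_eig hSDN hDN hN2 _ vb hDvb) hvb0
  have hβim : β.im = 0 := by
    simpa using himb
  have hα : α = ((α.re : ℝ) : ℂ) := by
    apply Complex.ext <;> simp [him]
  have hβ : β = ((β.re : ℝ) : ℂ) := by
    apply Complex.ext <;> simp [hβim]
  have hconjβ : (starRingEnd ℂ) β = β := Complex.conj_eq_iff_im.mpr hβim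
  have hconjα : (starRingEnd ℂ) α = α := Complex.conj_eq_iff_im.mpr him
  rw [hconjβ] at hDvb
  rw [hconjα] at hDcvb
  by_contra hne
  have hgv : v ∈ genEig n S α := mem_genEig_of_eig hSDN hDN hN2 α v hDv
  have hgvb : vb ∈ genEig n S β := mem_genEig_of_eig hSDN hDN hN2 β vb hDvb
  rcases eq_or_ne α 0 with hα0 | hα0
  · -- α = 0, so β ≠ 0 and we use condition (R) at β
    have hβ0 : β ≠ 0 := fun h => hne (by rw [h, hα0, neg_zero])
    have hβre0 : β.re ≠ 0 := fun h => hβ0 (by rw [hβ, h]; simp)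
    have hmem : vb ∈ genEig n S ((β.re : ℝ) : ℂ) ⊔ genEig n S (-((β.re : ℝ) : ℂ)) :=
      Submodule.mem_sup_left (by rw [← hβ]; exact hgvb)
    have hcr := hR β.re hβre0 vb hmem
    rw [hvbv] at hcr
    have hv00 : v = 0 := by
      refine genEig_indep (α := ((β.re : ℝ) : ℂ)) (β := (0:ℂ)) ?_ ?_ v hcr ?_
      · exact fun h => hβre0 (by exact_mod_cast h)
      · intro h
        apply hβre0
        have : ((β.re : ℝ) : ℂ) = 0 := by rw [← neg_neg ((β.re : ℝ) : ℂ), h, neg_zero]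
        exact_mod_cast this
      · rw [hα0] at hgv; exact hgv
    exact hv0 hv00
  · have hαre0 : α.re ≠ 0 := fun h => hα0 (by rw [hα, h]; simp)
    have hmem : v ∈ genEig n S ((α.re : ℝ) : ℂ) ⊔ genEig n S (-((α.re : ℝ) : ℂ)) :=
      Submodule.mem_sup_left (by rw [← hα]; exact hgv)
    have hcr := hR α.re hαre0 v hmem
    rcases eq_or_ne β α with hβα | hβα
    · -- positivity case : β = α ≠ 0
      have hDvb' : D.mulVec vb = ((α.re : ℝ) : ℂ) • vb := by rw [hDvb, hβα, hα]; simp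
      have hDv' : D.mulVec v = ((α.re : ℝ) : ℂ) • v := by rw [hDv, hα]; simp
      have hw1 : v + vb = 0 := by
        apply pos_core hS hpos hSDN hDN hN2 α.re hαre0
        · funext i
          simp [conjVec, hvb, add_comm]
        · rw [Matrix.mulVec_add, hDv', hDvb']
          module
      have hw2 : Complex.I • (v - vb) = 0 := by
        apply pos_core hS hpos hSDN hDN hN2 α.re hαre0
        · funext i
          simp only [conjVec, Pi.smul_apply, Pi.sub_apply, smul_eq_mul, _root_.map_mul,
            map_sub, Complex.conj_I, hvb]
          simp [conjVec]
          ring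
        · rw [Matrix.mulVec_smul, Matrix.mulVec_sub, hDv', hDvb']
          module
      have hsub : v - vb = 0 := by
        rcases smul_eq_zero.mp hw2 with h | h
        · exact absurd h Complex.I_ne_zero
        · exact h
      apply hv0
      funext i
      have h1 := congrFun hw1 i
      have h2 := congrFun hsub i
      simp only [Pi.add_apply, Pi.sub_apply, Pi.zero_apply] at h1 h2 ⊢
      linear_combination (h1 + h2) / 2
    · -- independence case
      have hvb00 : vb = 0 := by
        refine genEig_indep (α := ((α.re : ℝ) : ℂ)) (β := β) ?_ ?_ vb hcr ?_
        · rw [← hα]; exact fun h => hβα h.symm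
        · rw [← hα]; exact fun h => hne h.symm
        · exact hgvb
      exact hvb0 hvb00
end Statement9Aux

/-- if moreover condition (R) holds, then `[D₁, D₂] = 0` iff `D₁ = 0`. -/
theorem statement9 (n : ℕ) (S D N : Matrix (Idx n) (Idx n) ℂ)
    (hS : InSp n S) (hreal : ∀ z ∈ S.charpoly.roots, z.im = 0)
    (hpos : RePosQ n S) (hJ : IsJordanDecomp n S D N) (hN2 : N * N = 0)
    (hR : CondR n S) :
    (D.map Complex.re) * (D.map Complex.im) = (D.map Complex.im) * (D.map Complex.re) ↔
      D.map Complex.re = 0 := by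
  obtain ⟨hSDN, hsemi, hnil, hDN⟩ := hJ
  constructor
  · intro hcomm
    set Dc := D.map (starRingEnd ℂ) with hDcdef
    -- commutation of D and Dc
    have hcent : ∀ i j, (∑ k, (D i k).re * (D k j).im) = (∑ k, (D i k).im * (D k j).re) := by
      intro i j
      have h := congrFun (congrFun hcomm i) j
      simpa [Matrix.mul_apply, Matrix.map_apply] using h
    have hDDc : D * Dc = Dc * D := by
      ext i j
      simp only [Matrix.mul_apply, Matrix.map_apply, hDcdef]
      apply Complex.ext
      · rw [Complex.re_sum, Complex.re_sum]
        apply Finset.sum_congr rfl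
        intro k _
        simp [Complex.mul_re]
      · rw [Complex.im_sum, Complex.im_sum]
        have e1 : ∀ k : Idx n, (D i k * (starRingEnd ℂ) (D k j)).im
            = (D i k).im * (D k j).re - (D i k).re * (D k j).im := by
          intro k; simp [Complex.mul_im]; ring
        have e2 : ∀ k : Idx n, ((starRingEnd ℂ) (D i k) * D k j).im
            = (D i k).re * (D k j).im - (D i k).im * (D k j).re := by
          intro k; simp [Complex.mul_im]; ring
        rw [Finset.sum_congr rfl (fun k _ => e1 k), Finset.sum_congr rfl (fun k _ => e2 k),
          Finset.sum_sub_distrib, Finset.sum_sub_distrib, hcent i j]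
      -- done both
    -- semisimplicity of Dc
    have hsemiC : IsSemisimpleMat n Dc := by
      obtain ⟨P, d, hP, hDeq⟩ := hsemi
      have hdet := (Matrix.isUnit_iff_isUnit_det P).mp hP
      refine ⟨P.map (starRingEnd ℂ), fun i => (starRingEnd ℂ) (d i), ?_, ?_⟩
      · rw [Matrix.isUnit_iff_isUnit_det]
        have : (P.map (starRingEnd ℂ)).det = (starRingEnd ℂ) P.det := by
          rw [RingHom.map_det, RingHom.mapMatrix_apply]
        rw [this]
        exact hdet.map (starRingEnd ℂ)
      · have hQinv : (P.map (starRingEnd ℂ))⁻¹ = P⁻¹.map (starRingEnd ℂ) := by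
          apply Matrix.inv_eq_right_inv
          rw [← Matrix.map_mul, Matrix.mul_nonsing_inv P hdet]
          ext i j
          rcases eq_or_ne i j with rfl | h
          · simp [Matrix.map_apply, Matrix.one_apply]
          · simp [Matrix.map_apply, Matrix.one_apply, h]
        rw [hQinv, hDcdef, hDeq, Matrix.map_mul, Matrix.map_mul,
          Matrix.diagonal_map (by simp)]
    -- the commuting pair of endomorphisms
    have hmul : ∀ A B : Matrix (Idx n) (Idx n) ℂ,
        (Matrix.mulVecLin A) * (Matrix.mulVecLin B) = Matrix.mulVecLin (A * B) := by
      intro A B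
      rw [Matrix.mulVecLin_mul]
      rfl
    set f : Bool → Module.End ℂ (Idx n → ℂ) :=
      fun b => if b then Matrix.mulVecLin D else Matrix.mulVecLin Dc with hf
    have hcommute : Commute (Matrix.mulVecLin D) (Matrix.mulVecLin Dc) := by
      unfold Commute SemiconjBy
      rw [hmul, hmul, hDDc]
    have hpair : Pairwise fun i j => Commute (f i) (f j) := by
      intro i j hij
      cases i <;> cases j
      · exact absurd rfl hij
      · exact hcommute.symm
      · exact hcommute
      · exact absurd rfl hij
    have htop := Module.End.iSup_iInf_maxGenEigenspace_eq_top_of_iSup_maxGenEigenspace_eq_top_of_commute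
      f hpair (fun i => Module.End.iSup_maxGenEigenspace_eq_top _)
    -- every simultaneous generalized eigenvector is killed by D + Dc
    have hle : (⨆ χ : Bool → ℂ, ⨅ i, Module.End.maxGenEigenspace (f i) (χ i))
        ≤ LinearMap.ker (Matrix.mulVecLin (D + Dc)) := by
      apply iSup_le
      intro χ v hv
      rw [Submodule.mem_iInf] at hv
      have hvD : v ∈ Module.End.maxGenEigenspace (Matrix.mulVecLin D) (χ true) := by
        have h := hv true; simpa [hf] using h
      have hvDc : v ∈ Module.End.maxGenEigenspace (Matrix.mulVecLin Dc) (χ false) := by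
        have h := hv false; simpa [hf] using h
      have hDv : D.mulVec v = (χ true) • v := semisimple_eigen hsemi _ _ hvD
      have hDcv : Dc.mulVec v = (χ false) • v := semisimple_eigen hsemiC _ _ hvDc
      rw [LinearMap.mem_ker, Matrix.mulVecLin_apply, Matrix.add_mulVec, hDv, hDcv]
      rcases eq_or_ne v 0 with rfl | hv0
      · simp
      · have hβ : (χ false) = -(χ true) :=
          eig_pair hS hreal hpos hSDN hDN hN2 hR (χ true) (χ false) v hv0 hDv hDcv
        rw [hβ]
        module
    have hker : ∀ v : Idx n → ℂ, (D + Dc).mulVec v = 0 := by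
      intro v
      have hmem : v ∈ LinearMap.ker (Matrix.mulVecLin (D + Dc)) := by
        apply hle
        rw [htop]
        exact Submodule.mem_top
      rw [LinearMap.mem_ker, Matrix.mulVecLin_apply] at hmem
      exact hmem
    have hmat : D + Dc = 0 := by
      ext i j
      have h := congrFun (hker (Pi.single j 1)) i
      rw [Matrix.mulVec_single] at h
      simpa using h
    ext i j
    have h := congrFun (congrFun hmat i) j
    simp only [Matrix.add_apply, Matrix.map_apply, Matrix.zero_apply, hDcdef] at h ⊢
    have := congrArg Complex.re h
    simp only [Complex.add_re, Complex.conj_re, Complex.zero_re] at this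
    linarith
  · intro h
    rw [h, Matrix.zero_mul, Matrix.mul_zero]
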